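/- Let X ∈ 𝒳 and Y ∈ 𝒴 be discrete random variables with joint distribution p(x,y), where |𝒳| = |𝒴| = n. Then there exists a causal model Y = f(X,E) with E independent of X that induces p(x,y), in which the exogenous variable E has support of cardinality at most n(n−1)+1. -/

import Mathlib

/-- `(pE, f)` is a causal model in direction `X → Y` for the joint distribution `p`:
`pE` is the distribution of a finite exogenous variable `E` independent of `X`,
and `Y = f(X, E)`, so that `p x y = P(X = x) · P(f(x, E) = y)`. -/
def IsCausalModel {α β γ : Type*} [Fintype α] [Fintype β] [Fintype γ] [DecidableEq β]
    (p : α → β → ℝ) (pE : γ → ℝ) (f : α → γ → β) : Prop :=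
  (∀ e, 0 ≤ pE e) ∧ (∑ e, pE e = 1) ∧
    ∀ x y, p x y = (∑ y', p x y') * ∑ e, if f x e = y then pE e else 0

/-- **Upper bound on the minimum cardinality of the exogenous variable.**
Let `X ∈ 𝒳`, `Y ∈ 𝒴` with `|𝒳| = |𝒴| = n` have joint distribution `p(x,y)`.  Then there is a
causal model `Y = f(X,E)` with `E ⟂ X` inducing `p`, in which the exogenous variable `E`
has support of cardinality at most `n(n-1) + 1`. -/
theorem exists_causal_model_card_le
    {𝒳 𝒴 : Type*} [Fintype 𝒳] [Fintype 𝒴] [DecidableEq 𝒴] (n : ℕ)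
    (hX : Fintype.card 𝒳 = n) (hY : Fintype.card 𝒴 = n)
    (p : 𝒳 → 𝒴 → ℝ) (hnn : ∀ x y, 0 ≤ p x y) (hsum : ∑ x, ∑ y, p x y = 1) :
    ∃ (m : ℕ) (pE : Fin m → ℝ) (f : 𝒳 → Fin m → 𝒴),
      m ≤ n * (n - 1) + 1 ∧ IsCausalModel p pE f := by
  classical
  -- n ≥ 1
  have hn : 1 ≤ n := by
    by_contra h
    push_neg at h
    interval_cases n
    have : IsEmpty 𝒳 := Fintype.card_eq_zero_iff.mp hX
    rw [Finset.univ_eq_empty, Finset.sum_empty] at hsum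
    norm_num at hsum
  have hY1 : 0 < Fintype.card 𝒴 := by omega
  haveI : Nonempty 𝒴 := Fintype.card_pos_iff.mp hY1
  set marg : 𝒳 → ℝ := fun x => ∑ y, p x y with hmarg_def
  have hmarg_nn : ∀ x, 0 ≤ marg x := fun x => Finset.sum_nonneg fun y _ => hnn x y
  obtain ⟨y₀⟩ := ‹Nonempty 𝒴›
  set q : 𝒳 → 𝒴 → ℝ := fun x y =>
    if marg x = 0 then (if y = y₀ then 1 else 0) else p x y / marg x with hq_def
  have hq_nn : ∀ x y, 0 ≤ q x y := by
    intro x y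
    simp only [hq_def]
    split_ifs with h1 h2
    · norm_num
    · norm_num
    · exact div_nonneg (hnn x y) (hmarg_nn x)
  have hq_sum : ∀ x, ∑ y, q x y = 1 := by
    intro x
    simp only [hq_def]
    split_ifs with h1
    · simp
    · rw [← Finset.sum_div]
      exact div_self h1
  have hpq : ∀ x y, p x y = marg x * q x y := by
    intro x y
    by_cases h1 : marg x = 0
    · have hz : p x y = 0 := by
        have := (Finset.sum_eq_zero_iff_of_nonneg (fun y _ => hnn x y)).mp h1
        exact this y (Finset.mem_univ y)
      rw [hz, h1, zero_mul]
    · simp only [hq_def, if_neg h1]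
      field_simp
  -- the equivalence with Fin n
  set g : Fin n ≃ 𝒴 := (Fintype.equivFinOfCardEq hY).symm with hg_def
  -- CDF
  set F : 𝒳 → ℕ → ℝ := fun x k => ∑ y, if ((g.symm y : Fin n) : ℕ) < k then q x y else 0
    with hF_def
  have hF0 : ∀ x, F x 0 = 0 := by intro x; simp [hF_def]
  have hFn : ∀ x k, n ≤ k → F x k = 1 := by
    intro x k hk
    rw [← hq_sum x]
    apply Finset.sum_congr rfl
    intro y _
    rw [if_pos (lt_of_lt_of_le (g.symm y).isLt hk)]
  have hFmono : ∀ x {k l : ℕ}, k ≤ l → F x k ≤ F x l := by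
    intro x k l hkl
    apply Finset.sum_le_sum
    intro y _
    split_ifs with h1 h2
    · exact le_rfl
    · omega
    · exact hq_nn x y
    · exact le_rfl
  have hF_nn : ∀ x k, 0 ≤ F x k := by
    intro x k
    rw [← hF0 x]; exact hFmono x (Nat.zero_le k)
  have hF_le1 : ∀ x k, F x k ≤ 1 := by
    intro x k
    rw [← hFn x (max n k) (le_max_left _ _)]
    exact hFmono x (le_max_right _ _)
  have hFdiff : ∀ x (j : Fin n), F x (j + 1) - F x j = q x (g j) := by
    intro x j
    rw [hF_def]
    simp only
    rw [← Finset.sum_sub_distrib]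
    rw [show q x (g j) = ∑ y, if y = g j then q x y else 0 by rw [Finset.sum_ite_eq']; simp]
    apply Finset.sum_congr rfl
    intro y _
    by_cases hy : y = g j
    · have : (g.symm y : ℕ) = (j : ℕ) := by rw [hy]; simp
      rw [if_pos (by omega), if_neg (by omega), if_pos hy]; ring
    · have : (g.symm y : ℕ) ≠ (j : ℕ) := by
        intro hc
        apply hy
        have : g.symm y = j := Fin.ext hc
        rw [← this]; simp
      rw [if_neg hy]
      by_cases h2 : (g.symm y : ℕ) < j
      · rw [if_pos (by omega), if_pos h2]; ring
      · rw [if_neg (by omega), if_neg h2]; ring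
  -- the breakpoint set
  set T : Finset ℝ := ({0, 1} : Finset ℝ) ∪
      (Finset.univ : Finset (𝒳 × Fin (n - 1))).image (fun xk => F xk.1 (xk.2 + 1)) with hT_def
  have h0T : (0 : ℝ) ∈ T := by simp [hT_def]
  have h1T : (1 : ℝ) ∈ T := by simp [hT_def]
  have hTcard : T.card ≤ n * (n - 1) + 2 := by
    calc T.card ≤ ({0, 1} : Finset ℝ).card +
        ((Finset.univ : Finset (𝒳 × Fin (n - 1))).image
          (fun xk => F xk.1 (xk.2 + 1))).card := Finset.card_union_le _ _
      _ ≤ 2 + n * (n - 1) := by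
          gcongr
          · exact Finset.card_le_two
          · calc ((Finset.univ : Finset (𝒳 × Fin (n - 1))).image
                (fun xk => F xk.1 (xk.2 + 1))).card
                ≤ (Finset.univ : Finset (𝒳 × Fin (n - 1))).card := Finset.card_image_le
              _ = n * (n - 1) := by simp [hX]
      _ = n * (n - 1) + 2 := by ring
  have hT01 : ∀ r ∈ T, 0 ≤ r ∧ r ≤ 1 := by
    intro r hr
    rw [hT_def, Finset.mem_union] at hr
    rcases hr with hr | hr
    · simp only [Finset.mem_insert, Finset.mem_singleton] at hr
      rcases hr with rfl | rfl <;> norm_num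
    · obtain ⟨xk, _, rfl⟩ := Finset.mem_image.mp hr
      exact ⟨hF_nn _ _, hF_le1 _ _⟩
  have hTF : ∀ x (k : ℕ), k ≤ n → F x k ∈ T := by
    intro x k hk
    rcases Nat.eq_zero_or_pos k with rfl | hk0
    · rw [hF0]; exact h0T
    rcases eq_or_lt_of_le hk with rfl | hkn
    · rw [hFn x k le_rfl]; exact h1T
    · rw [hT_def, Finset.mem_union]
      right
      apply Finset.mem_image.mpr
      refine ⟨(x, ⟨k - 1, by omega⟩), Finset.mem_univ _, ?_⟩
      simp only
      congr 1
      omega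
  -- sorted list of breakpoints
  set L : List ℝ := T.sort (· ≤ ·) with hL_def
  have hLlen : L.length = T.card := Finset.length_sort _
  have hTcard2 : 2 ≤ T.card := by
    have : ({0, 1} : Finset ℝ) ⊆ T := by
      intro r hr
      simp only [Finset.mem_insert, Finset.mem_singleton] at hr
      rcases hr with rfl | rfl
      · exact h0T
      · exact h1T
    calc 2 = ({0, 1} : Finset ℝ).card := by norm_num
      _ ≤ T.card := Finset.card_le_card this
  set m : ℕ := T.card - 1 with hm_def
  have hm1 : 1 ≤ m := by omega
  have hLm : L.length = m + 1 := by omega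
  have hmle : m ≤ n * (n - 1) + 1 := by omega
  set s : ℕ → ℝ := fun k => L.getD k 1 with hs_def
  have hs_get : ∀ k (h : k < L.length), s k = L.get ⟨k, h⟩ := by
    intro k h
    rw [hs_def]
    simp only
    rw [List.getD_eq_getElem _ _ h]
    rfl
  have hs_mem : ∀ k, k ≤ m → s k ∈ T := by
    intro k hk
    rw [hs_get k (by omega)]
    rw [← Finset.mem_sort (α := ℝ) (· ≤ ·)]
    exact List.get_mem _ _
  have hstrict : ∀ a b : ℕ, a < b → b ≤ m → s a < s b := by
    intro a b hab hbm
    rw [hs_get a (by omega), hs_get b (by omega)]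
    exact (Finset.sortedLT_sort T).strictMono_get (by simpa using hab)
  have hsmono : ∀ a b : ℕ, a ≤ b → b ≤ m → s a ≤ s b := by
    intro a b hab hbm
    rcases eq_or_lt_of_le hab with rfl | h
    · exact le_rfl
    · exact le_of_lt (hstrict a b h hbm)
  have hs_idx : ∀ r ∈ T, ∃ a, a ≤ m ∧ s a = r := by
    intro r hr
    rw [← Finset.mem_sort (α := ℝ) (· ≤ ·), ← hL_def] at hr
    obtain ⟨i, hi⟩ := List.mem_iff_get.mp hr
    refine ⟨i.1, by have := i.2; omega, ?_⟩
    rw [hs_get i.1 i.2]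
    exact hi
  have hs0 : s 0 = 0 := by
    obtain ⟨a, ham, ha⟩ := hs_idx 0 h0T
    have h1 : 0 ≤ s 0 := (hT01 _ (hs_mem 0 (by omega))).1
    have h2 : s 0 ≤ s a := hsmono 0 a (Nat.zero_le a) ham
    rw [ha] at h2
    linarith
  have hsm : s m = 1 := by
    obtain ⟨b, hbm, hb⟩ := hs_idx 1 h1T
    have h1 : s m ≤ 1 := (hT01 _ (hs_mem m le_rfl)).2
    have h2 : s b ≤ s m := hsmono b m hbm le_rfl
    rw [hb] at h2
    linarith
  -- the exogenous distribution
  set pE : Fin m → ℝ := fun i => s (i + 1) - s i with hpE_def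
  have hpE_nn : ∀ i, 0 ≤ pE i := by
    intro i
    have := hstrict i (i + 1) (Nat.lt_succ_self _) i.isLt
    simp only [hpE_def]
    linarith
  have hpE_sum : ∑ i, pE i = 1 := by
    rw [hpE_def]
    rw [Fin.sum_univ_eq_sum_range (fun i => s (i + 1) - s i) m]
    rw [Finset.sum_range_sub s m, hs0, hsm, sub_zero]
  -- the mechanism f
  have Hx : ∀ (x : 𝒳) (i : Fin m), ∃ k, s (i + 1) ≤ F x (k + 1) := by
    intro x i
    refine ⟨n - 1, ?_⟩
    rw [hFn x (n - 1 + 1) (by omega)]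
    have : s (i + 1) ≤ s m := hsmono (i + 1) m i.isLt le_rfl
    rw [hsm] at this
    exact this
  have hfind_lt : ∀ (x : 𝒳) (i : Fin m), Nat.find (Hx x i) < n := by
    intro x i
    have : Nat.find (Hx x i) ≤ n - 1 := Nat.find_le (by
      rw [hFn x (n - 1 + 1) (by omega)]
      have : s (i + 1) ≤ s m := hsmono (i + 1) m i.isLt le_rfl
      rw [hsm] at this
      exact this)
    omega
  set f : 𝒳 → Fin m → 𝒴 := fun x i => g ⟨Nat.find (Hx x i), hfind_lt x i⟩ with hf_def
  -- characterization of f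
  have hf_iff : ∀ (x : 𝒳) (i : Fin m) (j : Fin n),
      f x i = g j ↔ (F x j < s (i + 1) ∧ s (i + 1) ≤ F x (j + 1)) := by
    intro x i j
    rw [hf_def]
    simp only
    rw [g.apply_eq_iff_eq]
    rw [show (⟨Nat.find (Hx x i), hfind_lt x i⟩ : Fin n) = j ↔ Nat.find (Hx x i) = (j : ℕ) by
      constructor
      · intro h; rw [← h]
      · intro h; exact Fin.ext h]
    rw [Nat.find_eq_iff]
    constructor
    · rintro ⟨h1, h2⟩
      refine ⟨?_, h1⟩
      rcases Nat.eq_zero_or_pos (j : ℕ) with hj0 | hj0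
      · rw [hj0, hF0]
        have := hstrict 0 (i + 1) (by omega) i.isLt
        rw [hs0] at this
        exact this
      · have := h2 ((j : ℕ) - 1) (by omega)
        push_neg at this
        rwa [show (j : ℕ) - 1 + 1 = (j : ℕ) by omega] at this
    · rintro ⟨h1, h2⟩
      refine ⟨h2, ?_⟩
      intro k hk
      push_neg
      calc F x (k + 1) ≤ F x j := hFmono x (by omega)
        _ < s (i + 1) := h1
  -- the induced conditional distribution is q
  have hmain : ∀ (x : 𝒳) (y : 𝒴), (∑ i, if f x i = y then pE i else 0) = q x y := by
    intro x y
    set j : Fin n := g.symm y with hj_def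
    have hy : y = g j := by rw [hj_def]; simp
    obtain ⟨a, ham, ha⟩ := hs_idx (F x j) (hTF x j (by omega))
    obtain ⟨b, hbm, hb⟩ := hs_idx (F x (j + 1)) (hTF x (j + 1) (by omega))
    have hab : a ≤ b := by
      by_contra hc
      push_neg at hc
      have := hstrict b a hc ham
      rw [ha, hb] at this
      have := hFmono x (Nat.le_succ (j : ℕ))
      linarith
    have hcond : ∀ i : Fin m, (f x i = y) ↔ (a ≤ (i : ℕ) ∧ (i : ℕ) < b) := by
      intro i
      rw [hy, hf_iff x i j, ← ha, ← hb]
      constructor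
      · rintro ⟨h1, h2⟩
        constructor
        · by_contra hc
          push_neg at hc
          have := hsmono (i + 1) a hc ham
          linarith
        · by_contra hc
          push_neg at hc
          have := hstrict b (i + 1) (by omega) i.isLt
          linarith
      · rintro ⟨h1, h2⟩
        constructor
        · exact lt_of_le_of_lt (hsmono a i h1 (le_of_lt i.isLt)) (hstrict i (i + 1) (by omega) i.isLt)
        · exact hsmono (i + 1) b h2 hbm
    calc (∑ i, if f x i = y then pE i else 0)
        = ∑ i : Fin m, if a ≤ (i : ℕ) ∧ (i : ℕ) < b then s ((i : ℕ) + 1) - s (i : ℕ) else 0 := by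
          apply Finset.sum_congr rfl
          intro i _
          rw [hpE_def]
          simp only
          congr 1
          · exact propext (hcond i)
      _ = ∑ i ∈ Finset.range m, if a ≤ i ∧ i < b then s (i + 1) - s i else 0 := by
          exact Fin.sum_univ_eq_sum_range (fun i => if a ≤ i ∧ i < b then s (i + 1) - s i else 0) m
      _ = ∑ i ∈ Finset.Ico a b, (s (i + 1) - s i) := by
          rw [← Finset.sum_filter]
          congr 1
          ext i
          simp only [Finset.mem_filter, Finset.mem_range, Finset.mem_Ico]
          omega
      _ = F x (j + 1) - F x j := by
          rw [Finset.sum_Ico_eq_sub _ hab, Finset.sum_range_sub s, Finset.sum_range_sub s,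
            hs0, ← ha, ← hb]
          ring
      _ = q x y := by rw [hFdiff x j, ← hy]
  refine ⟨m, pE, f, hmle, hpE_nn, hpE_sum, ?_⟩
  intro x y
  rw [hmain x y]
  exact hpq x y
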